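/- Let M be a ℚ-vector space with a basis {[Z]} indexed by a finite poset (P, ≺), and let f be a linear operator family f_i^{(t)} together with maps ε_i : P → ℕ and bijections ρ_{i,t} between {Z : ε_i(Z) = t} and corresponding index sets, satisfying: for each Z with ε_i(Z) = t > 0, f_i^{(t)}[ρ_{i,t}(Z)] = ±[Z] + Σ_{ε_i(Z'') > t} c_{Z''} [Z'']. Then for every t ≥ 0, the subspace f_i^t M equals span{[Z] : ε_i(Z) ≥ t}, where f_i = f_i^{(1)} and it is assumed f_i^{(t)} maps into span{[Z] : ε_i(Z) ≥ t} and f_i^s f_i^{(t)} ⊆ f_i^{s+t} M appropriately. -/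

import Mathlib

open Finset

/-- Abstract form of `f_i^t H(𝔏(ω)) = span{[Z] : ε_i(Z) ≥ t}`.  `M` has a finite
basis `b` indexed by `P` (the irreducible components), `f` is the Hecke operator
`f_i`, and `fdiv t` is the divided power `f_i^{(t)}`.  Assuming: `fdiv 1 = f`;
each `fdiv t` lands in the range of `f^t`; `f^t` maps into the span of the basis
vectors with `ε ≥ t`; and the triangularity `fdiv (ε Z) w = ± b Z + Σ_{ε > ε Z} c • b`
for suitable `w` whenever `ε Z > 0`; one gets `range (f^t) = span{b Z : ε Z ≥ t}`. -/
theorem stmt_13 {P : Type} [Fintype P] {M : Type} [AddCommGroup M] [Module ℚ M]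
    (b : Module.Basis P ℚ M) (ε : P → ℕ)
    (f : Module.End ℚ M) (fdiv : ℕ → M →ₗ[ℚ] M)
    (hf1 : fdiv 1 = f)
    (hpow : ∀ (t : ℕ) (m : M), ∃ m', fdiv t m = (f ^ t) m')
    (hsub : ∀ t : ℕ, LinearMap.range (f ^ t) ≤ Submodule.span ℚ (b '' {Z | t ≤ ε Z}))
    (htri : ∀ Z : P, 0 < ε Z → ∃ (w : M) (s : ℚ), (s = 1 ∨ s = -1) ∧ ∃ c : P → ℚ,
        fdiv (ε Z) w = s • b Z + ∑ Z' ∈ univ.filter (fun Z' => ε Z < ε Z'), c Z' • b Z') :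
    ∀ t : ℕ, LinearMap.range (f ^ t) = Submodule.span ℚ (b '' {Z | t ≤ ε Z}) := by
  classical
  -- range of higher powers is contained in range of lower powers
  have hmono : ∀ a c : ℕ, a ≤ c → LinearMap.range (f ^ c) ≤ LinearMap.range (f ^ a) := by
    intro a c hac
    obtain ⟨d, rfl⟩ := Nat.exists_eq_add_of_le hac
    rw [pow_add]
    rintro x ⟨y, rfl⟩
    exact ⟨(f ^ d) y, rfl⟩
  set N : ℕ := Finset.univ.sup ε with hN
  have hle : ∀ Z : P, ε Z ≤ N := fun Z => Finset.le_sup (mem_univ Z)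
  have key : ∀ m : ℕ, ∀ Z : P, N - ε Z < m → b Z ∈ LinearMap.range (f ^ ε Z) := by
    intro m
    induction m with
    | zero => intro Z h; omega
    | succ m ih =>
      intro Z h
      by_cases h0 : ε Z = 0
      · rw [h0, pow_zero]
        exact ⟨b Z, rfl⟩
      · obtain ⟨w, s, hs, c, hw⟩ := htri Z (Nat.pos_of_ne_zero h0)
        have hwmem : fdiv (ε Z) w ∈ LinearMap.range (f ^ ε Z) := by
          obtain ⟨m', hm'⟩ := hpow (ε Z) w
          exact ⟨m', hm'.symm⟩
        have hsummem : (∑ Z' ∈ univ.filter (fun Z' => ε Z < ε Z'), c Z' • b Z')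
            ∈ LinearMap.range (f ^ ε Z) := by
          refine Submodule.sum_mem _ ?_
          intro Z' hZ'
          rw [Finset.mem_filter] at hZ'
          have h1 : N - ε Z' < m := by
            have := hle Z'
            omega
          exact Submodule.smul_mem _ _ (hmono _ _ (le_of_lt hZ'.2) (ih Z' h1))
        have hsmem : s • b Z ∈ LinearMap.range (f ^ ε Z) := by
          have : s • b Z = fdiv (ε Z) w - ∑ Z' ∈ univ.filter (fun Z' => ε Z < ε Z'), c Z' • b Z' := by
            rw [hw]; abel
          rw [this]
          exact Submodule.sub_mem _ hwmem hsummem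
        have hs0 : s ≠ 0 := by rcases hs with h | h <;> rw [h] <;> norm_num
        have := Submodule.smul_mem _ s⁻¹ hsmem
        rwa [smul_smul, inv_mul_cancel₀ hs0, one_smul] at this
  intro t
  refine le_antisymm (hsub t) ?_
  rw [Submodule.span_le]
  rintro x ⟨Z, hZ, rfl⟩
  exact hmono t (ε Z) hZ (key (N - ε Z + 1) Z (Nat.lt_succ_self _))
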